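/- arXiv:0908.2729 — 10 statements merged into one kernel-verified Lean document; each statement's English description precedes it below -/
import Mathlib

section
/- Let V be a real vector space of dimension at least 2. There is no (ε)-almost paracontact metric structure (φ, ξ, η, g, ε) on V satisfying η(X) g(Y, Z) = η(Y) g(X, Z) for all X, Y, Z ∈ V. Equivalently, if such a structure satisfies this identity, one obtains g(φX, φZ) = 0 for all X, Z ∈ V, contradicting the nondegeneracy of g. -/
/-- On a real vector space of dimension at least `2`, no `(ε)`-almost paracontact
metric structure can satisfy `η(X) g(Y,Z) = η(Y) g(X,Z)` for all `X, Y, Z`. -/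
theorem stmt_8 {V : Type*} [AddCommGroup V] [Module ℝ V]
    (hdim : 2 ≤ Module.rank ℝ V)
    (φ : V →ₗ[ℝ] V) (ξ : V) (η : V →ₗ[ℝ] ℝ)
    (g : V →ₗ[ℝ] V →ₗ[ℝ] ℝ) (ε : ℝ)
    (hφ2 : ∀ X : V, φ (φ X) = X - η X • ξ)
    (hηξ : η ξ = 1)
    (hφξ : φ ξ = 0)
    (hηφ : ∀ X : V, η (φ X) = 0)
    (hgsym : ∀ X Y : V, g X Y = g Y X)
    (hgnd : ∀ X : V, (∀ Y : V, g X Y = 0) → X = 0)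
    (hε : ε = 1 ∨ ε = -1)
    (hgφ : ∀ X Y : V, g (φ X) (φ Y) = g X Y - ε * (η X * η Y))
    (hflat : ∀ X Y Z : V, η X * g Y Z = η Y * g X Z) :
    False := by
  have hφ0 : ∀ X : V, φ X = 0 := by
    intro X
    apply hgnd
    intro Z
    have := hflat (φ X) ξ Z
    rw [hηφ X, hηξ] at this
    linarith
  have hspan : ∀ X : V, X = η X • ξ := by
    intro X
    have := hφ2 X
    rw [hφ0 X, map_zero] at this
    have : X - η X • ξ = 0 := this.symm
    linear_combination (norm := module) this
  have hle : Module.rank ℝ V ≤ 1 := rank_le_one_iff.2 ⟨ξ, fun w => ⟨η w, (hspan w).symm⟩⟩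
  have : (2 : Cardinal) ≤ 1 := le_trans hdim hle
  norm_num at this
end

section
/- Let (φ, ξ, η, g, ε) be an (ε)-almost paracontact metric structure on a real vector space V with fundamental form Φ(X, Y) = g(X, φY). Let R : V × V × V × V → ℝ be a multilinear map satisfying the pair symmetry R(X, Y, Z, W) = R(Z, W, X, Y) for all arguments and, for all X, Y, Z, W ∈ V, the identity R(X, Y, φZ, φW) − R(X, Y, Z, W) = ε Φ(Y, Z) Φ(X, W) − ε Φ(X, Z) Φ(Y, W) + ε g(φX, φZ) g(φY, φW) − ε g(φY, φZ) g(φX, φW) + η(Z)(η(Y) g(X, W) − η(X) g(Y, W)) − η(W)(η(Y) g(X, Z) − η(X) g(Y, Z)). Then R(X, Y, φZ, φW) = R(φX, φY, Z, W) for all X, Y, Z, W ∈ V. -/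
/-- In an `(ε)`-almost paracontact metric vector space, a multilinear map `R` with pair
symmetry satisfying identity (5.15) also satisfies `R(X,Y,φZ,φW) = R(φX,φY,Z,W)`. -/
theorem stmt_9 {V : Type*} [AddCommGroup V] [Module ℝ V]
    (φ : V →ₗ[ℝ] V) (ξ : V) (η : V →ₗ[ℝ] ℝ)
    (g : V →ₗ[ℝ] V →ₗ[ℝ] ℝ) (ε : ℝ)
    (hφ2 : ∀ X : V, φ (φ X) = X - η X • ξ)
    (hηξ : η ξ = 1)
    (hφξ : φ ξ = 0)
    (hηφ : ∀ X : V, η (φ X) = 0)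
    (hgsym : ∀ X Y : V, g X Y = g Y X)
    (hgnd : ∀ X : V, (∀ Y : V, g X Y = 0) → X = 0)
    (hε : ε = 1 ∨ ε = -1)
    (hgφ : ∀ X Y : V, g (φ X) (φ Y) = g X Y - ε * (η X * η Y))
    (Φ : V → V → ℝ) (hΦ : ∀ X Y : V, Φ X Y = g X (φ Y))
    (R : V →ₗ[ℝ] V →ₗ[ℝ] V →ₗ[ℝ] V →ₗ[ℝ] ℝ)
    (hpair : ∀ X Y Z W : V, R X Y Z W = R Z W X Y)
    (hid : ∀ X Y Z W : V,
      R X Y (φ Z) (φ W) - R X Y Z W =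
        ε * Φ Y Z * Φ X W - ε * Φ X Z * Φ Y W
          + ε * g (φ X) (φ Z) * g (φ Y) (φ W) - ε * g (φ Y) (φ Z) * g (φ X) (φ W)
          + η Z * (η Y * g X W - η X * g Y W)
          - η W * (η Y * g X Z - η X * g Y Z)) :
    ∀ X Y Z W : V, R X Y (φ Z) (φ W) = R (φ X) (φ Y) Z W := by
  -- g X ξ = ε η X
  have hgξ : ∀ A : V, g A ξ = ε * η A := by
    intro A
    have h := hgφ A ξ
    rw [hφξ, hηξ] at h
    simp at h
    linarith
  have hgφξ : ∀ A : V, g (φ A) ξ = 0 := by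
    intro A
    rw [hgξ, hηφ, mul_zero]
  -- Φ is symmetric
  have hΦflip : ∀ A B : V, g A (φ B) = g (φ A) B := by
    intro A B
    have h := hgφ A (φ B)
    rw [hηφ, mul_zero, mul_zero, sub_zero, hφ2 B] at h
    have h2 : g (φ A) (B - η B • ξ) = g (φ A) B - η B * g (φ A) ξ := by
      simp [map_sub, map_smul, smul_eq_mul]
    rw [h2, hgφξ, mul_zero, sub_zero] at h
    exact h.symm
  have hΦsym : ∀ A B : V, Φ A B = Φ B A := by
    intro A B
    rw [hΦ, hΦ, hΦflip, hgsym]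
  intro X Y Z W
  have h1 := hid X Y Z W
  have h2 := hid Z W X Y
  rw [hpair Z W (φ X) (φ Y), hpair Z W X Y,
    hΦsym W X, hΦsym Z Y, hΦsym Z X, hΦsym W Y,
    hgsym (φ Z) (φ X), hgsym (φ W) (φ Y), hgsym (φ W) (φ X), hgsym (φ Z) (φ Y),
    hgsym Z Y, hgsym W Y, hgsym Z X, hgsym W X] at h2
  linear_combination h1 - h2
end

section
/- Let (φ, ξ, η, g, ε) be an (ε)-almost paracontact metric structure on a real vector space V with fundamental form Φ(X, Y) = g(X, φY). Let R : V × V × V × V → ℝ be a multilinear map satisfying, for all X, Y, Z, W ∈ V: (i) R(X, Y, Z, W) = R(Z, W, X, Y); (ii) R(X, Y, Z, W) = −R(X, Y, W, Z); (iii) R(X, Y, Z, ξ) = −η(X) g(Y, Z) + η(Y) g(X, Z); and (iv) R(X, Y, φZ, φW) − R(X, Y, Z, W) = ε Φ(Y, Z) Φ(X, W) − ε Φ(X, Z) Φ(Y, W) + ε g(φX, φZ) g(φY, φW) − ε g(φY, φZ) g(φX, φW) + η(Z)(η(Y) g(X, W) − η(X) g(Y, W)) − η(W)(η(Y) g(X,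 Z) − η(X) g(Y, Z)). Then for all X, Y, Z, W ∈ V: R(φX, φY, φZ, φW) = R(X, Y, Z, W) + η(Z)(η(Y) g(X, W) − η(X) g(Y, W)) − η(W)(η(Y) g(X, Z) − η(X) g(Y, Z)). -/
/-- In an `(ε)`-almost paracontact metric vector space, a multilinear map `R` with the
stated symmetries and identities satisfies identity (5.17):
`R(φX,φY,φZ,φW) = R(X,Y,Z,W) + η(Z)(η(Y)g(X,W) − η(X)g(Y,W)) − η(W)(η(Y)g(X,Z) − η(X)g(Y,Z))`. -/
theorem stmt_10 {V : Type*} [AddCommGroup V] [Module ℝ V]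
    (φ : V →ₗ[ℝ] V) (ξ : V) (η : V →ₗ[ℝ] ℝ)
    (g : V →ₗ[ℝ] V →ₗ[ℝ] ℝ) (ε : ℝ)
    (hφ2 : ∀ X : V, φ (φ X) = X - η X • ξ)
    (hηξ : η ξ = 1)
    (hφξ : φ ξ = 0)
    (hηφ : ∀ X : V, η (φ X) = 0)
    (hgsym : ∀ X Y : V, g X Y = g Y X)
    (hgnd : ∀ X : V, (∀ Y : V, g X Y = 0) → X = 0)
    (hε : ε = 1 ∨ ε = -1)
    (hgφ : ∀ X Y : V, g (φ X) (φ Y) = g X Y - ε * (η X * η Y))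
    (Φ : V → V → ℝ) (hΦ : ∀ X Y : V, Φ X Y = g X (φ Y))
    (R : V →ₗ[ℝ] V →ₗ[ℝ] V →ₗ[ℝ] V →ₗ[ℝ] ℝ)
    (hpair : ∀ X Y Z W : V, R X Y Z W = R Z W X Y)
    (hskew : ∀ X Y Z W : V, R X Y Z W = -R X Y W Z)
    (hRξ : ∀ X Y Z : V, R X Y Z ξ = -(η X) * g Y Z + η Y * g X Z)
    (hid : ∀ X Y Z W : V,
      R X Y (φ Z) (φ W) - R X Y Z W =
        ε * Φ Y Z * Φ X W - ε * Φ X Z * Φ Y W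
          + ε * g (φ X) (φ Z) * g (φ Y) (φ W) - ε * g (φ Y) (φ Z) * g (φ X) (φ W)
          + η Z * (η Y * g X W - η X * g Y W)
          - η W * (η Y * g X Z - η X * g Y Z)) :
    ∀ X Y Z W : V,
      R (φ X) (φ Y) (φ Z) (φ W) =
        R X Y Z W + η Z * (η Y * g X W - η X * g Y W)
          - η W * (η Y * g X Z - η X * g Y Z) := by

  intro X Y Z W
  have hε2 : ε * ε = 1 := by rcases hε with h | h <;> rw [h] <;> ring
  have hgξ : ∀ A : V, g ξ A = ε * η A := by
    intro A
    have h := hgφ ξ A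
    rw [hφξ] at h
    simp only [map_zero, LinearMap.zero_apply, hηξ] at h
    linarith
  have hgφξ : ∀ A : V, g (φ A) ξ = 0 := by
    intro A
    rw [hgsym, hgξ, hηφ, mul_zero]
  have hφsym : ∀ A B : V, g (φ A) B = g A (φ B) := by
    intro A B
    have hB : B = φ (φ B) + η B • ξ := by rw [hφ2]; abel
    calc g (φ A) B = g (φ A) (φ (φ B) + η B • ξ) := by rw [← hB]
      _ = g (φ A) (φ (φ B)) + η B * g (φ A) ξ := by simp [mul_comm]
      _ = g A (φ B) - ε * (η A * η (φ B)) + η B * 0 := by rw [hgφ, hgφξ]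
      _ = g A (φ B) := by rw [hηφ]; ring
  have hgφφ : ∀ A B : V, g (φ (φ A)) (φ B) = g A (φ B) := by
    intro A B
    rw [hφ2]
    simp only [map_sub, map_smul, LinearMap.sub_apply, LinearMap.smul_apply, smul_eq_mul]
    rw [hgξ, hηφ]
    ring
  have h1 := hid (φ Z) (φ W) X Y
  have h2 := hid X Y Z W
  have h3 := hpair (φ Z) (φ W) (φ X) (φ Y)
  have h4 := hpair (φ Z) (φ W) X Y
  simp only [hΦ, hηφ, hgφφ, hgφ] at h1 h2
  have e1 : g (φ W) X = g W (φ X) := hφsym W X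
  have e2 : g (φ Z) Y = g Z (φ Y) := hφsym Z Y
  have e3 : g (φ Z) X = g Z (φ X) := hφsym Z X
  have e4 : g (φ W) Y = g W (φ Y) := hφsym W Y
  have e5 : g Z (φ X) = g X (φ Z) := by rw [← hφsym, hgsym]
  have e6 : g W (φ Y) = g Y (φ W) := by rw [← hφsym, hgsym]
  have e7 : g W (φ X) = g X (φ W) := by rw [← hφsym, hgsym]
  have e8 : g Z (φ Y) = g Y (φ Z) := by rw [← hφsym, hgsym]
  have e9 : g W Z = g Z W := hgsym W Z
  have e10 : g W X = g X W := hgsym W X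
  have e11 : g W Y = g Y W := hgsym W Y
  have e12 : g Z X = g X Z := hgsym Z X
  have e13 : g Z Y = g Y Z := hgsym Z Y
  rw [e1, e2, e3, e4, e5, e6, e7, e8, e10, e11, e12, e13] at h1
  linear_combination -h3 + h1 + h4 + h2
end

section
/- Let (φ, ξ, η, g, ε) be an (ε)-almost paracontact metric structure on a real vector space V with fundamental form Φ(X, Y) = g(X, φY). Let R : V × V × V × V → ℝ be a multilinear map satisfying, for all X, Y, Z, W ∈ V: (i) ε R(X, Y, Z, φW) = g(X, Z) Φ(Y, W) − g(Y, Z) Φ(X, W), and (ii) R(X, Y, Z, ξ) = −η(X) g(Y, Z) + η(Y) g(X, Z). Then R(X, Y, Z, W) = −ε (g(Y, Z) g(X, W) − g(X, Z) g(Y, W)) for all X, Y, Z, W ∈ V. -/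
/-- In an `(ε)`-almost paracontact metric vector space, a multilinear map `R` satisfying
`ε R(X,Y,Z,φW) = g(X,Z)Φ(Y,W) − g(Y,Z)Φ(X,W)` and
`R(X,Y,Z,ξ) = −η(X)g(Y,Z) + η(Y)g(X,Z)` is of constant-curvature form
`R(X,Y,Z,W) = −ε(g(Y,Z)g(X,W) − g(X,Z)g(Y,W))`. -/
theorem stmt_11 {V : Type*} [AddCommGroup V] [Module ℝ V]
    (φ : V →ₗ[ℝ] V) (ξ : V) (η : V →ₗ[ℝ] ℝ)
    (g : V →ₗ[ℝ] V →ₗ[ℝ] ℝ) (ε : ℝ)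
    (hφ2 : ∀ X : V, φ (φ X) = X - η X • ξ)
    (hηξ : η ξ = 1)
    (hφξ : φ ξ = 0)
    (hηφ : ∀ X : V, η (φ X) = 0)
    (hgsym : ∀ X Y : V, g X Y = g Y X)
    (hgnd : ∀ X : V, (∀ Y : V, g X Y = 0) → X = 0)
    (hε : ε = 1 ∨ ε = -1)
    (hgφ : ∀ X Y : V, g (φ X) (φ Y) = g X Y - ε * (η X * η Y))
    (Φ : V → V → ℝ) (hΦ : ∀ X Y : V, Φ X Y = g X (φ Y))
    (R : V →ₗ[ℝ] V →ₗ[ℝ] V →ₗ[ℝ] V →ₗ[ℝ] ℝ)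
    (hsymR : ∀ X Y Z W : V,
      ε * R X Y Z (φ W) = g X Z * Φ Y W - g Y Z * Φ X W)
    (hRξ : ∀ X Y Z : V, R X Y Z ξ = -(η X) * g Y Z + η Y * g X Z) :
    ∀ X Y Z W : V,
      R X Y Z W = -ε * (g Y Z * g X W - g X Z * g Y W) := by
  intro X Y Z W
  have hε2 : ε * ε = 1 := by rcases hε with h | h <;> rw [h] <;> norm_num
  have hgξ : ∀ X : V, g X ξ = ε * η X := by
    intro X
    have h := hgφ X ξ
    rw [hφξ, hηξ] at h
    simp at h
    linarith [h]
  have key := hsymR X Y Z (φ W)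
  rw [hφ2 W, map_sub, map_smul, hRξ] at key
  simp only [hΦ, hφ2 W, map_sub, map_smul, hgξ, smul_eq_mul] at key
  have key2 : ε * (((R X) Y) Z) W = (g X) Z * (g Y) W - (g Y) Z * (g X) W := by
    linear_combination key
  linear_combination ε * key2 - (((R X) Y) Z) W * hε2
end

section
/- Let (φ, ξ, η, g, ε) be an (ε)-almost paracontact metric structure on a real vector space V. Let R : V × V × V → V be a trilinear map, written R(X, Y)Z, satisfying for all X, Y, Z, U ∈ V: (i) R(ξ, X)Y = −ε g(X, Y) ξ + η(Y) X; (ii) R(X, Y)ξ = η(X) Y − η(Y) X; and (iii) R(ξ, U)(R(X, Y)ξ) − R(X, Y)(R(ξ, U)ξ) − R(R(ξ, U)X, Y)ξ − R(X, R(ξ, U)Y)ξ = 0. Then R(X, Y)W = −ε (g(Y, W) X − g(X, W) Y) for all X, Y, W ∈ V. -/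
/-- In an `(ε)`-almost paracontact metric vector space, a trilinear map `R(X,Y)Z`
satisfying `R(ξ,X)Y = −ε g(X,Y)ξ + η(Y)X`, `R(X,Y)ξ = η(X)Y − η(Y)X` and the
semi-symmetry condition `(R(ξ,U)·R)(X,Y)ξ = 0` is of constant-curvature form
`R(X,Y)W = −ε (g(Y,W)X − g(X,W)Y)`. -/
theorem stmt_12 {V : Type*} [AddCommGroup V] [Module ℝ V]
    (φ : V →ₗ[ℝ] V) (ξ : V) (η : V →ₗ[ℝ] ℝ)
    (g : V →ₗ[ℝ] V →ₗ[ℝ] ℝ) (ε : ℝ)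
    (hφ2 : ∀ X : V, φ (φ X) = X - η X • ξ)
    (hηξ : η ξ = 1)
    (hφξ : φ ξ = 0)
    (hηφ : ∀ X : V, η (φ X) = 0)
    (hgsym : ∀ X Y : V, g X Y = g Y X)
    (hgnd : ∀ X : V, (∀ Y : V, g X Y = 0) → X = 0)
    (hε : ε = 1 ∨ ε = -1)
    (hgφ : ∀ X Y : V, g (φ X) (φ Y) = g X Y - ε * (η X * η Y))
    (R : V →ₗ[ℝ] V →ₗ[ℝ] V →ₗ[ℝ] V)
    (hRξX : ∀ X Y : V, R ξ X Y = (-ε * g X Y) • ξ + η Y • X)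
    (hRXYξ : ∀ X Y : V, R X Y ξ = η X • Y - η Y • X)
    (hss : ∀ X Y U : V,
      R ξ U (R X Y ξ) - R X Y (R ξ U ξ) - R (R ξ U X) Y ξ - R X (R ξ U Y) ξ = 0) :
    ∀ X Y W : V, R X Y W = (-ε) • (g Y W • X - g X W • Y) := by
  intro X Y W
  have hgξ : ∀ Z : V, g Z ξ = ε * η Z := by
    intro Z
    have h := hgφ Z ξ
    rw [hφξ, hηξ] at h
    simp at h
    linarith
  have hgξ' : ∀ Z : V, g ξ Z = ε * η Z := fun Z => by rw [hgsym]; exact hgξ Z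
  have key := hss X Y W
  simp only [hRXYξ, hRξX, map_add, map_sub, map_smul, LinearMap.add_apply,
    LinearMap.sub_apply, LinearMap.smul_apply, hηξ, hgξ, hgξ', smul_eq_mul,
    smul_sub, smul_add, smul_smul] at key
  rw [hgsym Y W, hgsym X W]
  rcases hε with rfl | rfl <;>
  · linear_combination (norm := module) -key
end

section
/- Let (φ, ξ, η, g, ε) be an (ε)-almost paracontact metric structure on an n-dimensional real vector space V. Let S be a bilinear form on V satisfying S(φY, φZ) = S(Y, Z) + (n − 1) η(Y) η(Z) for all Y, Z ∈ V. Then S(Y, ξ) = −(n − 1) η(Y) for all Y ∈ V, and S(φY, Z) = S(Y, φZ) for all Y, Z ∈ V. -/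
/-- In an `n`-dimensional `(ε)`-almost paracontact metric vector space, a bilinear form
`S` with `S(φY,φZ) = S(Y,Z) + (n−1)η(Y)η(Z)` satisfies `S(Y,ξ) = −(n−1)η(Y)` and
`S(φY,Z) = S(Y,φZ)`. -/
theorem stmt_13 {V : Type*} [AddCommGroup V] [Module ℝ V] [FiniteDimensional ℝ V]
    (n : ℕ) (hn : Module.finrank ℝ V = n)
    (φ : V →ₗ[ℝ] V) (ξ : V) (η : V →ₗ[ℝ] ℝ)
    (g : V →ₗ[ℝ] V →ₗ[ℝ] ℝ) (ε : ℝ)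
    (hφ2 : ∀ X : V, φ (φ X) = X - η X • ξ)
    (hηξ : η ξ = 1)
    (hφξ : φ ξ = 0)
    (hηφ : ∀ X : V, η (φ X) = 0)
    (hgsym : ∀ X Y : V, g X Y = g Y X)
    (hgnd : ∀ X : V, (∀ Y : V, g X Y = 0) → X = 0)
    (hε : ε = 1 ∨ ε = -1)
    (hgφ : ∀ X Y : V, g (φ X) (φ Y) = g X Y - ε * (η X * η Y))
    (S : V →ₗ[ℝ] V →ₗ[ℝ] ℝ)
    (hS : ∀ Y Z : V, S (φ Y) (φ Z) = S Y Z + ((n : ℝ) - 1) * (η Y * η Z)) :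
    (∀ Y : V, S Y ξ = -((n : ℝ) - 1) * η Y) ∧
      ∀ Y Z : V, S (φ Y) Z = S Y (φ Z) := by
  have h1 : ∀ Y : V, S Y ξ = -((n : ℝ) - 1) * η Y := by
    intro Y
    have := hS Y ξ
    rw [hφξ, hηξ] at this
    simp at this
    linarith
  have hξ : ∀ Z : V, S ξ Z = -((n : ℝ) - 1) * η Z := by
    intro Z
    have := hS ξ Z
    rw [hφξ, hηξ] at this
    simp at this
    linarith
  refine ⟨h1, fun Y Z => ?_⟩
  have := hS (φ Y) Z
  rw [hηφ, hφ2] at this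
  have h2 : S (Y - η Y • ξ) (φ Z) = S Y (φ Z) - η Y * S ξ (φ Z) := by
    simp [map_sub, LinearMap.sub_apply, LinearMap.smul_apply]
  rw [h2, hξ, hηφ] at this
  simp at this
  linarith
end

section
/- Let (φ, ξ, η, g, ε) be an (ε)-almost paracontact metric structure on an n-dimensional real vector space V with n ≥ 2, and let Φ(X, Y) = g(X, φY). Let S be a bilinear form on V and α a linear functional on V such that S(Y, ξ) = −(n − 1) η(Y) for all Y ∈ V and ε S(φX, Y) + (n − 1) Φ(X, Y) = (n − 1) α(X) η(Y) for all X, Y ∈ V. Then α = 0. -/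
/-- In an `n`-dimensional (`n ≥ 2`) `(ε)`-almost paracontact metric vector space, if a
bilinear form `S` and a linear functional `α` satisfy `S(Y,ξ) = −(n−1)η(Y)` and
`ε S(φX,Y) + (n−1)Φ(X,Y) = (n−1)α(X)η(Y)`, then `α = 0`. -/
theorem stmt_14 {V : Type*} [AddCommGroup V] [Module ℝ V] [FiniteDimensional ℝ V]
    (n : ℕ) (hn : Module.finrank ℝ V = n) (hn2 : 2 ≤ n)
    (φ : V →ₗ[ℝ] V) (ξ : V) (η : V →ₗ[ℝ] ℝ)
    (g : V →ₗ[ℝ] V →ₗ[ℝ] ℝ) (ε : ℝ)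
    (hφ2 : ∀ X : V, φ (φ X) = X - η X • ξ)
    (hηξ : η ξ = 1)
    (hφξ : φ ξ = 0)
    (hηφ : ∀ X : V, η (φ X) = 0)
    (hgsym : ∀ X Y : V, g X Y = g Y X)
    (hgnd : ∀ X : V, (∀ Y : V, g X Y = 0) → X = 0)
    (hε : ε = 1 ∨ ε = -1)
    (hgφ : ∀ X Y : V, g (φ X) (φ Y) = g X Y - ε * (η X * η Y))
    (Φ : V → V → ℝ) (hΦ : ∀ X Y : V, Φ X Y = g X (φ Y))
    (S : V →ₗ[ℝ] V →ₗ[ℝ] ℝ) (α : V →ₗ[ℝ] ℝ)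
    (hSξ : ∀ Y : V, S Y ξ = -((n : ℝ) - 1) * η Y)
    (hrec : ∀ X Y : V,
      ε * S (φ X) Y + ((n : ℝ) - 1) * Φ X Y = ((n : ℝ) - 1) * (α X * η Y)) :
    α = 0 := by
  ext X
  have h := hrec X ξ
  rw [hSξ (φ X), hηφ X, hΦ, hφξ, hηξ] at h
  simp only [map_zero, mul_zero, mul_one, zero_add] at h
  have hne : ((n : ℝ) - 1) ≠ 0 := by
    have : (2 : ℝ) ≤ n := by exact_mod_cast hn2
    linarith
  have := mul_left_cancel₀ hne (h.symm.trans (mul_zero _).symm)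
  simpa using this
end

section
/- Let (φ, ξ, η, g, ε) be an (ε)-almost paracontact metric structure on an n-dimensional real vector space V, and let Φ(X, Y) = g(X, φY). Let S be a symmetric bilinear form on V such that S(Y, ξ) = −(n − 1) η(Y) for all Y ∈ V and ε S(φX, Y) + (n − 1) Φ(X, Y) = 0 for all X, Y ∈ V. Then S(X, Y) = −ε (n − 1) g(X, Y) for all X, Y ∈ V. -/
/-- In an `n`-dimensional `(ε)`-almost paracontact metric vector space, a symmetric
bilinear form `S` with `S(Y,ξ) = −(n−1)η(Y)` and `ε S(φX,Y) + (n−1)Φ(X,Y) = 0`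
satisfies `S = −ε(n−1)g`. -/
theorem stmt_15 {V : Type*} [AddCommGroup V] [Module ℝ V] [FiniteDimensional ℝ V]
    (n : ℕ) (hn : Module.finrank ℝ V = n)
    (φ : V →ₗ[ℝ] V) (ξ : V) (η : V →ₗ[ℝ] ℝ)
    (g : V →ₗ[ℝ] V →ₗ[ℝ] ℝ) (ε : ℝ)
    (hφ2 : ∀ X : V, φ (φ X) = X - η X • ξ)
    (hηξ : η ξ = 1)
    (hφξ : φ ξ = 0)
    (hηφ : ∀ X : V, η (φ X) = 0)
    (hgsym : ∀ X Y : V, g X Y = g Y X)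
    (hgnd : ∀ X : V, (∀ Y : V, g X Y = 0) → X = 0)
    (hε : ε = 1 ∨ ε = -1)
    (hgφ : ∀ X Y : V, g (φ X) (φ Y) = g X Y - ε * (η X * η Y))
    (Φ : V → V → ℝ) (hΦ : ∀ X Y : V, Φ X Y = g X (φ Y))
    (S : V →ₗ[ℝ] V →ₗ[ℝ] ℝ)
    (hSsym : ∀ X Y : V, S X Y = S Y X)
    (hSξ : ∀ Y : V, S Y ξ = -((n : ℝ) - 1) * η Y)
    (hid : ∀ X Y : V, ε * S (φ X) Y + ((n : ℝ) - 1) * Φ X Y = 0) :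
    ∀ X Y : V, S X Y = -ε * ((n : ℝ) - 1) * g X Y := by
  have hε2 : ε * ε = 1 := by rcases hε with h | h <;> simp [h]
  intro X Y
  have h1 := hid (φ X) Y
  rw [hΦ, hφ2 X] at h1
  have h2 : S (X - η X • ξ) Y = S X Y - η X * S ξ Y := by
    simp [map_sub, LinearMap.sub_apply, LinearMap.smul_apply]
  have h3 : g (φ X) (φ Y) = g X Y - ε * (η X * η Y) := hgφ X Y
  rw [h3, h2] at h1
  have hSξY : S ξ Y = -((n : ℝ) - 1) * η Y := by rw [hSsym]; exact hSξ Y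
  rw [hSξY] at h1
  -- h1 : ε * (S X Y - η X * (-((n:ℝ)-1) * η Y)) + ((n:ℝ)-1) * (g X Y - ε * (η X * η Y)) = 0
  have key : ε * S X Y = -((n : ℝ) - 1) * g X Y := by linarith
  calc S X Y = ε * (ε * S X Y) := by rw [← mul_assoc, hε2, one_mul]
    _ = -ε * ((n : ℝ) - 1) * g X Y := by rw [key]; ring
end

section
/- Let (φ, ξ, η, g, ε) be an (ε)-almost paracontact metric structure on an n-dimensional real vector space V. Let S be a symmetric bilinear form on V satisfying S(Y, ξ) = −(n − 1) η(Y) for all Y ∈ V, and suppose that for all X, Y ∈ V: S(−ε g(X, Y) ξ + η(Y) X, ξ) + S(Y, −η(X) ξ + X) = 0. Then S(X, Y) = −ε (n − 1) g(X, Y) for all X, Y ∈ V. -/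
/-- In an `n`-dimensional `(ε)`-almost paracontact metric vector space, a symmetric
bilinear form `S` with `S(Y,ξ) = −(n−1)η(Y)` satisfying the Ricci-semi-symmetry
condition `S(−ε g(X,Y)ξ + η(Y)X, ξ) + S(Y, −η(X)ξ + X) = 0` satisfies
`S = −ε(n−1)g`. -/
theorem stmt_16 {V : Type*} [AddCommGroup V] [Module ℝ V] [FiniteDimensional ℝ V]
    (n : ℕ) (hn : Module.finrank ℝ V = n)
    (φ : V →ₗ[ℝ] V) (ξ : V) (η : V →ₗ[ℝ] ℝ)
    (g : V →ₗ[ℝ] V →ₗ[ℝ] ℝ) (ε : ℝ)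
    (hφ2 : ∀ X : V, φ (φ X) = X - η X • ξ)
    (hηξ : η ξ = 1)
    (hφξ : φ ξ = 0)
    (hηφ : ∀ X : V, η (φ X) = 0)
    (hgsym : ∀ X Y : V, g X Y = g Y X)
    (hgnd : ∀ X : V, (∀ Y : V, g X Y = 0) → X = 0)
    (hε : ε = 1 ∨ ε = -1)
    (hgφ : ∀ X Y : V, g (φ X) (φ Y) = g X Y - ε * (η X * η Y))
    (S : V →ₗ[ℝ] V →ₗ[ℝ] ℝ)
    (hSsym : ∀ X Y : V, S X Y = S Y X)
    (hSξ : ∀ Y : V, S Y ξ = -((n : ℝ) - 1) * η Y)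
    (hss : ∀ X Y : V,
      S ((-ε * g X Y) • ξ + η Y • X) ξ + S Y (-(η X) • ξ + X) = 0) :
    ∀ X Y : V, S X Y = -ε * ((n : ℝ) - 1) * g X Y := by
  intro X Y
  have h := hss Y X
  simp only [map_add, map_smul, LinearMap.add_apply, LinearMap.smul_apply,
    smul_eq_mul, hSξ, hηξ, hSsym X Y] at h
  rw [hgsym Y X] at h
  rw [hSsym]
  linear_combination h
end

section
/- Let V be a real vector space, ψ : V → V a linear map, ξ ∈ V, η a linear functional on V, g a nondegenerate symmetric bilinear form on V, and ε ∈ {1, −1}, such that ψ(ψX) = −X + η(X)ξ for all X ∈ V, η(ξ) = 1, ψξ = 0, η(ψX) = 0 for all X ∈ V, and g(ψX, ψY) = g(X, Y) − ε η(X) η(Y) for all X, Y ∈ V. Define φ = ψ ∘ ψ. Then (φ, ξ, η, g, ε) is an (ε)-almost paracontact metric structure on V, i.e. φ(φX) = X − η(X)ξ for all X, η(ξ) = 1, φξ = 0, η(φX) = 0 for all X, and g(φX, φY) = g(X, Y) − ε η(X) η(Y) for all X, Y ∈ V. -/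
/-- If `(ψ, ξ, η, g, ε)` is an `(ε)`-almost contact metric structure on a real vector
space, then `(φ = ψ², ξ, η, g, ε)` is an `(ε)`-almost paracontact metric structure. -/
theorem stmt_18 {V : Type*} [AddCommGroup V] [Module ℝ V]
    (ψ : V →ₗ[ℝ] V) (ξ : V) (η : V →ₗ[ℝ] ℝ)
    (g : V →ₗ[ℝ] V →ₗ[ℝ] ℝ) (ε : ℝ)
    (hψ2 : ∀ X : V, ψ (ψ X) = -X + η X • ξ)
    (hηξ : η ξ = 1)
    (hψξ : ψ ξ = 0)
    (hηψ : ∀ X : V, η (ψ X) = 0)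
    (hgsym : ∀ X Y : V, g X Y = g Y X)
    (hgnd : ∀ X : V, (∀ Y : V, g X Y = 0) → X = 0)
    (hε : ε = 1 ∨ ε = -1)
    (hgψ : ∀ X Y : V, g (ψ X) (ψ Y) = g X Y - ε * (η X * η Y))
    (φ : V →ₗ[ℝ] V) (hφ : φ = ψ ∘ₗ ψ) :
    (∀ X : V, φ (φ X) = X - η X • ξ) ∧
      η ξ = 1 ∧
      φ ξ = 0 ∧
      (∀ X : V, η (φ X) = 0) ∧
      ∀ X Y : V, g (φ X) (φ Y) = g X Y - ε * (η X * η Y) := by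
  subst hφ
  have hφX : ∀ X : V, (ψ ∘ₗ ψ) X = -X + η X • ξ := fun X => hψ2 X
  have hηφ : ∀ X : V, η ((ψ ∘ₗ ψ) X) = 0 := by
    intro X
    rw [hφX X]
    simp [hηξ]
  refine ⟨?_, hηξ, ?_, hηφ, ?_⟩
  · intro X
    simp only [LinearMap.comp_apply]
    rw [hψ2 (ψ (ψ X)), hηψ (ψ X), hψ2 X]
    module
  · simp [LinearMap.comp_apply, hψξ]
  · intro X Y
    simp only [LinearMap.comp_apply]
    rw [hgψ (ψ X) (ψ Y), hηψ, hηψ, hgψ X Y]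
    ring
end
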